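/- For every positive integer n, the rate loss of the binary systematic VT encoder relative to the smallest binary VT code of length n is less than 1/n: that is, min_{0 ≤ a ≤ n} (1/n)·log₂|VT_a(n)| − (1 − ⌈log₂(n+1)⌉/n) < 1/n, where 1 − ⌈log₂(n+1)⌉/n is the rate of the systematic encoder. -/

import Mathlib

/-- VT syndrome of a binary sequence `s_1 ⋯ s_n` (represented 0-indexed):
`syn S = (∑ i, i · s_i) mod (n+1)`. -/
def synBin {n : ℕ} (S : Fin n → Fin 2) : ℕ :=
  (∑ i : Fin n, (i.val + 1) * (S i).val) % (n + 1)

/-- The binary VT code `VT_a(n)`. -/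
def VTbin (n : ℕ) (a : ℕ) : Finset (Fin n → Fin 2) :=
  Finset.univ.filter fun S => synBin S = a

theorem vt_binary_encoder_rate_loss (n : ℕ) (hn : 1 ≤ n) :
    ((Finset.range (n + 1)).inf'
        (Finset.nonempty_range_iff.mpr (Nat.succ_ne_zero n))
        fun a => Real.logb 2 ((VTbin n a).card) / n)
      - (1 - (Nat.clog 2 (n + 1) : ℝ) / n) < 1 / n := by
  have hn1 : (1:ℝ) ≤ (n:ℝ) := by exact_mod_cast hn
  have hnpos : (0:ℝ) < (n:ℝ) := by linarith
  set C := Nat.clog 2 (n + 1) with hCdef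
  set L := Real.logb 2 ((n:ℝ) + 1) with hLdef
  -- sum of cards is 2^n
  have hsum : ∑ a ∈ Finset.range (n+1), ((VTbin n a).card) = 2^n := by
    have h := Finset.card_eq_sum_card_fiberwise
      (f := fun S : Fin n → Fin 2 => synBin S) (s := Finset.univ)
      (t := Finset.range (n+1))
      (fun S _ => Finset.mem_range.mpr (Nat.mod_lt _ (Nat.succ_pos n)))
    have hcardu : (Finset.univ : Finset (Fin n → Fin 2)).card = 2^n := by
      simp [Finset.card_univ]
    rw [hcardu] at h
    exact h.symm
  -- n+1 ≤ 2^n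
  have hle : (n:ℝ) + 1 ≤ (2:ℝ)^n := by
    have : n + 1 ≤ 2^n := Nat.succ_le_of_lt (Nat.lt_two_pow_self)
    exact_mod_cast this
  -- some fiber has card ≤ 2^n/(n+1)
  have hexists : ∃ a ∈ Finset.range (n+1), ((VTbin n a).card : ℝ) ≤ (2:ℝ)^n / ((n:ℝ)+1) := by
    by_contra h
    push_neg at h
    have hlt : (2:ℝ)^n < ∑ a ∈ Finset.range (n+1), ((VTbin n a).card : ℝ) := by
      calc (2:ℝ)^n = ∑ _a ∈ Finset.range (n+1), (2:ℝ)^n / ((n:ℝ)+1) := by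
            rw [Finset.sum_const, Finset.card_range, nsmul_eq_mul, Nat.cast_add, Nat.cast_one]
            field_simp
        _ < _ := Finset.sum_lt_sum_of_nonempty
            (Finset.nonempty_range_iff.mpr (Nat.succ_ne_zero n)) (fun a ha => h a ha)
    have : ∑ a ∈ Finset.range (n+1), ((VTbin n a).card : ℝ) = (2:ℝ)^n := by
      exact_mod_cast congrArg (Nat.cast : ℕ → ℝ) hsum
    linarith
  obtain ⟨a, ha, hcard⟩ := hexists
  have hinf : ((Finset.range (n + 1)).inf'
        (Finset.nonempty_range_iff.mpr (Nat.succ_ne_zero n))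
        fun a => Real.logb 2 ((VTbin n a).card) / n)
      ≤ Real.logb 2 ((VTbin n a).card) / n := Finset.inf'_le _ ha
  have hquot_pos : (1:ℝ) ≤ (2:ℝ)^n / ((n:ℝ)+1) := by
    rw [le_div_iff₀ (by linarith)]
    linarith
  have hlogquot : Real.logb 2 ((2:ℝ)^n / ((n:ℝ)+1)) = (n:ℝ) - L := by
    rw [Real.logb_div (by positivity) (by positivity), Real.logb_pow,
      Real.logb_self_eq_one (by norm_num), mul_one]
  have hlogcard : Real.logb 2 ((VTbin n a).card) ≤ (n:ℝ) - L := by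
    rw [← hlogquot]
    rcases Nat.eq_zero_or_pos (VTbin n a).card with h0 | hpos
    · rw [h0]
      simp only [Nat.cast_zero, Real.logb_zero]
      exact Real.logb_nonneg (by norm_num) hquot_pos
    · exact Real.logb_le_logb_of_le (by norm_num) (by exact_mod_cast hpos) hcard
  -- clog bound: C - 1 < L
  have hC1 : 1 ≤ C := Nat.clog_pos (by norm_num) (by omega)
  have hClt : (C:ℝ) - 1 < L := by
    have hp : 2 ^ (C - 1) < n + 1 := Nat.pow_pred_clog_lt_self (by norm_num) (by omega)
    have hpr : (2:ℝ) ^ (C - 1) < (n:ℝ) + 1 := by exact_mod_cast hp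
    have : Real.logb 2 ((2:ℝ) ^ (C - 1)) < L := by
      exact Real.logb_lt_logb (by norm_num) (by positivity) hpr
    rw [Real.logb_pow, Real.logb_self_eq_one (by norm_num)] at this
    have hc : ((C - 1 : ℕ) : ℝ) = (C:ℝ) - 1 := by
      rw [Nat.cast_sub hC1]; norm_num
    rw [hc] at this
    linarith
  have hLn : L ≤ (n:ℝ) := by
    have : Real.logb 2 ((n:ℝ)+1) ≤ Real.logb 2 ((2:ℝ)^n) := by
      exact Real.logb_le_logb_of_le (by norm_num) (by positivity) hle
    rwa [Real.logb_pow, Real.logb_self_eq_one (by norm_num), mul_one] at this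
  have hdiv : Real.logb 2 ((VTbin n a).card) / n ≤ ((n:ℝ) - L) / n := by
    gcongr
  have h1 : ((n:ℝ) - L)/n = 1 - L/n := by field_simp
  have h2 : ((C:ℝ) - 1)/n < L/n := by gcongr
  have h3 : (C:ℝ)/n - 1/n < L/n := by rw [← sub_div]; exact h2
  rw [h1] at hdiv
  linarith
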